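/- Let K ≥ 0, c ≥ 0, m ∈ ℕ with m ≥ 1, and let μ : ℝ^d × ℝ^d → ℝ^d be continuously differentiable in its first argument satisfying ‖∂_x μ(x,y)‖ ≤ K(1 + ‖x‖^c) for all x,y ∈ ℝ^d and ‖μ(x,y₁) − μ(x,y₂)‖ ≤ K‖y₁−y₂‖ for all x,y₁,y₂ ∈ ℝ^d. Then for all x, y ∈ ℝ^d with max(‖x‖,‖y‖) > 1 and ‖x‖ ≤ m^{1/(2c)}, ‖y‖ ≤ m^{1/(2c)}, one has ‖μ(x,y)‖² ≤ m(15K² + 3‖μ(0,0)‖²)(‖x‖² + ‖y‖²). -/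

import Mathlib

/-- Inequality (3.8): growth control of the superlinear drift on the bounded event.
The constraint `‖x‖ ≤ m^{1/(2c)}` is encoded equivalently as `‖x‖^{2c} ≤ m`
(for `c = 0` this is no constraint, matching the convention `m^{1/0} = ∞`). -/
theorem stmt2 {d : ℕ} (K c : ℝ) (hK : 0 ≤ K) (hc : 0 ≤ c) (m : ℕ) (hm : 1 ≤ m)
    (μ : EuclideanSpace ℝ (Fin d) → EuclideanSpace ℝ (Fin d) → EuclideanSpace ℝ (Fin d))
    (hdiff : ∀ y : EuclideanSpace ℝ (Fin d), ContDiff ℝ 1 (fun x => μ x y))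
    (hjac : ∀ x y : EuclideanSpace ℝ (Fin d),
      ‖fderiv ℝ (fun z => μ z y) x‖ ≤ K * (1 + ‖x‖ ^ c))
    (hlip : ∀ x y₁ y₂ : EuclideanSpace ℝ (Fin d),
      ‖μ x y₁ - μ x y₂‖ ≤ K * ‖y₁ - y₂‖) :
    ∀ x y : EuclideanSpace ℝ (Fin d), 1 < max ‖x‖ ‖y‖ →
      ‖x‖ ^ (2 * c) ≤ (m : ℝ) → ‖y‖ ^ (2 * c) ≤ (m : ℝ) →
      ‖μ x y‖ ^ 2 ≤ (m : ℝ) * (15 * K ^ 2 + 3 * ‖μ 0 0‖ ^ 2) * (‖x‖ ^ 2 + ‖y‖ ^ 2) := by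
  intro x y hmax hxm hym
  set A := ‖x‖ with hA
  set B := ‖y‖ with hB
  have hA0 : 0 ≤ A := norm_nonneg x
  have hB0 : 0 ≤ B := norm_nonneg y
  -- mean value inequality on the closed ball of radius A
  have hmv : ‖μ x 0 - μ 0 0‖ ≤ K * (1 + A ^ c) * A := by
    have hconv : Convex ℝ (Metric.closedBall (0 : EuclideanSpace ℝ (Fin d)) A) :=
      convex_closedBall _ _
    have hbound : ∀ z ∈ Metric.closedBall (0 : EuclideanSpace ℝ (Fin d)) A,
        ‖fderiv ℝ (fun z => μ z 0) z‖ ≤ K * (1 + A ^ c) := by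
      intro z hz
      refine (hjac z 0).trans ?_
      have hz' : ‖z‖ ≤ A := by simpa using Metric.mem_closedBall.mp hz
      have : ‖z‖ ^ c ≤ A ^ c := Real.rpow_le_rpow (norm_nonneg z) hz' hc
      nlinarith
    have hdf : ∀ z ∈ Metric.closedBall (0 : EuclideanSpace ℝ (Fin d)) A,
        DifferentiableAt ℝ (fun z => μ z 0) z := fun z _ =>
      (hdiff 0).differentiable one_ne_zero z
    have := hconv.norm_image_sub_le_of_norm_fderiv_le hdf hbound
      (Metric.mem_closedBall_self hA0)
      (by simp [Metric.mem_closedBall, hA] : x ∈ Metric.closedBall (0 : EuclideanSpace ℝ (Fin d)) A)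
    simpa using this
  have hlip' : ‖μ x y - μ x 0‖ ≤ K * B := by simpa using hlip x y 0
  have htri : ‖μ x y‖ ≤ K * (1 + A ^ c) * A + K * B + ‖μ 0 0‖ := by
    calc ‖μ x y‖ = ‖(μ x y - μ x 0) + (μ x 0 - μ 0 0) + μ 0 0‖ := by
          rw [sub_add_sub_cancel, sub_add_cancel]
    _ ≤ ‖μ x y - μ x 0‖ + ‖μ x 0 - μ 0 0‖ + ‖μ 0 0‖ := norm_add₃_le
    _ ≤ K * B + (K * (1 + A ^ c) * A) + ‖μ 0 0‖ := by gcongr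
    _ = K * (1 + A ^ c) * A + K * B + ‖μ 0 0‖ := by ring
  -- rewrite the 2c-power
  have hxc2 : (A ^ c) ^ 2 ≤ (m : ℝ) := by
    have : A ^ (2 * c) = (A ^ c) ^ (2 : ℕ) := by
      rw [← Real.rpow_natCast (A ^ c) 2, ← Real.rpow_mul hA0]
      norm_num [mul_comm]
    linarith [hxm, this]
  have hxc0 : 0 ≤ A ^ c := Real.rpow_nonneg hA0 c
  have hm1 : (1 : ℝ) ≤ (m : ℝ) := by exact_mod_cast hm
  have hsq1 : (1 : ℝ) < A ^ 2 + B ^ 2 := by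
    rcases max_cases A B with ⟨h1, _⟩ | ⟨h1, _⟩ <;> rw [h1] at hmax <;> nlinarith
  have hP0 : 0 ≤ ‖μ 0 0‖ := norm_nonneg _
  have hN0 : 0 ≤ ‖μ x y‖ := norm_nonneg _
  nlinarith [sq_nonneg (K * (1 + A ^ c) * A - K * B), sq_nonneg (K * (1 + A ^ c) * A - ‖μ 0 0‖),
    sq_nonneg (K * B - ‖μ 0 0‖), sq_nonneg (1 - A ^ c), mul_nonneg hK hB0,
    mul_nonneg (mul_nonneg hK (by positivity : (0:ℝ) ≤ 1 + A ^ c)) hA0,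
    sq_nonneg (K * A), sq_nonneg (K * B), sq_nonneg ‖μ 0 0‖,
    mul_le_mul_of_nonneg_left hxc2 (mul_nonneg (sq_nonneg K) (sq_nonneg A)),
    mul_le_mul_of_nonneg_left hsq1.le (mul_nonneg (by positivity : (0:ℝ) ≤ (m:ℝ)) (sq_nonneg ‖μ 0 0‖))]
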